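/- For x3, x3' ∈ A^k, say x3 ≈ x3' iff f^k(x1, x2, x3) = f^k(x1, x2, x3') for all x1, x2 ∈ A^k, and let g : A^k → (A^k / ≈) denote the quotient map sending x3 to its ≈-equivalence class. For any zero-error code for f with block length k, with X3 uniformly distributed on A^k, Z31 := φ31(X3), and Z32 := φ32(X3), one has H(g(X3)) ≤ H(Z31) + H(Z32). -/

import Mathlib

open Classical

/-- A zero-error (variable-length) code for computing `f` componentwise with block length `k`
on the diamond network: encoders `phi31, phi32` (from `s₃`), `phi1, phi2` (to the terminal)
and a decoder `psi` that recovers `f^k` with zero error. -/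
structure ZECode (A B Z : Type*) (k : ℕ) (f : A → A → A → B) where
  phi31 : (Fin k → A) → List Z
  phi32 : (Fin k → A) → List Z
  phi1 : (Fin k → A) → List Z → List Z
  phi2 : (Fin k → A) → List Z → List Z
  psi : List Z → List Z → (Fin k → B)
  zero_error : ∀ x1 x2 x3 : Fin k → A,
    psi (phi1 x1 (phi31 x3)) (phi2 x2 (phi32 x3)) = fun i => f (x1 i) (x2 i) (x3 i)

/-- Base-2 Shannon entropy of the random variable `W` when the underlying finite sample
space `Ω` carries the uniform distribution (convention `0·log(1/0) = 0`). -/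
noncomputable def uH {Ω S : Type*} [Fintype Ω] (W : Ω → S) : ℝ :=
  ∑ s ∈ Finset.univ.image W,
    (((Finset.univ.filter fun ω => W ω = s).card : ℝ) / (Fintype.card Ω : ℝ)) *
      Real.logb 2 ((Fintype.card Ω : ℝ) / ((Finset.univ.filter fun ω => W ω = s).card : ℝ))

/-- Base-2 conditional Shannon entropy `H(W | V)` for the uniform distribution on `Ω`:
`H(W|V) = ∑_v P(V = v) · H(W | V = v)`, with the convention `0·log(1/0) = 0`. -/
noncomputable def uCondH {Ω S T : Type*} [Fintype Ω] (W : Ω → S) (V : Ω → T) : ℝ :=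
  ∑ v ∈ Finset.univ.image V, ∑ s ∈ Finset.univ.image W,
    (((Finset.univ.filter fun ω => W ω = s ∧ V ω = v).card : ℝ) / (Fintype.card Ω : ℝ)) *
      Real.logb 2 (((Finset.univ.filter fun ω => V ω = v).card : ℝ) /
        ((Finset.univ.filter fun ω => W ω = s ∧ V ω = v).card : ℝ))

/-- `x1 ≡^{a3} y1 |₁` : `f(x1, x2, a3) = f(y1, x2, a3)` for all `x2`. -/
def eqv1 {A B : Type*} (f : A → A → A → B) (a3 : A) (x y : A) : Prop :=
  ∀ x2, f x x2 a3 = f y x2 a3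

/-- `x2 ≡^{a3} y2 |₂` : `f(x1, x2, a3) = f(x1, y2, a3)` for all `x1`. -/
def eqv2 {A B : Type*} (f : A → A → A → B) (a3 : A) (x y : A) : Prop :=
  ∀ x1, f x1 x a3 = f x1 y a3

/-- Componentwise extension of `≡^{a3}|₁` to blocks of length `k`. -/
def eqv1k {A B : Type*} (f : A → A → A → B) {k : ℕ} (a3 : Fin k → A) (x y : Fin k → A) : Prop :=
  ∀ i, eqv1 f (a3 i) (x i) (y i)

/-- Componentwise extension of `≡^{a3}|₂` to blocks of length `k`. -/
def eqv2k {A B : Type*} (f : A → A → A → B) {k : ℕ} (a3 : Fin k → A) (x y : Fin k → A) : Prop :=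
  ∀ i, eqv2 f (a3 i) (x i) (y i)

/-- `≡^{a3}|₁` as a setoid on `A`. -/
def eqv1Setoid {A B : Type*} (f : A → A → A → B) (a3 : A) : Setoid A where
  r := eqv1 f a3
  iseqv := ⟨fun _ _ => rfl, fun h x2 => (h x2).symm, fun h h' x2 => (h x2).trans (h' x2)⟩

/-- `≡^{a3}|₂` as a setoid on `A`. -/
def eqv2Setoid {A B : Type*} (f : A → A → A → B) (a3 : A) : Setoid A where
  r := eqv2 f a3
  iseqv := ⟨fun _ _ => rfl, fun h x1 => (h x1).symm, fun h h' x1 => (h x1).trans (h' x1)⟩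

/-- `≡^{a3}|₁` as a setoid on `A^k`. -/
def eqv1kSetoid {A B : Type*} (f : A → A → A → B) {k : ℕ} (a3 : Fin k → A) :
    Setoid (Fin k → A) where
  r := eqv1k f a3
  iseqv := ⟨fun _ _ _ => rfl, fun h i x2 => (h i x2).symm,
    fun h h' i x2 => (h i x2).trans (h' i x2)⟩

/-- `≡^{a3}|₂` as a setoid on `A^k`. -/
def eqv2kSetoid {A B : Type*} (f : A → A → A → B) {k : ℕ} (a3 : Fin k → A) :
    Setoid (Fin k → A) where
  r := eqv2k f a3
  iseqv := ⟨fun _ _ _ => rfl, fun h i x1 => (h i x1).symm,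
    fun h h' i x1 => (h i x1).trans (h' i x1)⟩

/-- The equivalence `x3 ≈ x3'` on `A^k`: same demand-function values for all `x1, x2`. -/
def approxSetoid {A B : Type*} (f : A → A → A → B) (k : ℕ) : Setoid (Fin k → A) where
  r x3 x3' := ∀ x1 x2 : Fin k → A, ∀ i, f (x1 i) (x2 i) (x3 i) = f (x1 i) (x2 i) (x3' i)
  iseqv := ⟨fun _ _ _ _ => rfl, fun h x1 x2 i => (h x1 x2 i).symm,
    fun h h' x1 x2 i => (h x1 x2 i).trans (h' x1 x2 i)⟩

lemma fiber_pos {Ω S : Type*} [Fintype Ω] (W : Ω → S) {s : S}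
    (hs : s ∈ Finset.univ.image W) :
    0 < (Finset.univ.filter fun ω => W ω = s).card := by
  obtain ⟨ω, -, rfl⟩ := Finset.mem_image.mp hs
  exact Finset.card_pos.mpr ⟨ω, by simp⟩

lemma sum_fiber_card {Ω S : Type*} [Fintype Ω] (W : Ω → S) :
    ∑ s ∈ Finset.univ.image W, (Finset.univ.filter fun ω => W ω = s).card
      = Fintype.card Ω := by
  rw [← Finset.card_univ]
  exact (Finset.card_eq_sum_card_fiberwise
    (fun ω _ => Finset.mem_image_of_mem W (Finset.mem_univ ω))).symm

lemma uH_comp_le {Ω S T : Type*} [Fintype Ω] (V : Ω → T) (h : T → S) :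
    uH (fun ω => h (V ω)) ≤ uH V := by
  cases isEmpty_or_nonempty Ω with
  | inl hΩ => simp [uH, Finset.univ_eq_empty]
  | inr hΩ =>
    have hn0 : (0 : ℝ) < (Fintype.card Ω : ℝ) := by
      exact_mod_cast Fintype.card_pos
    set n : ℝ := (Fintype.card Ω : ℝ) with hn
    rw [uH, uH]
    rw [← Finset.sum_fiberwise_of_maps_to (g := h)
      (t := Finset.univ.image fun ω => h (V ω))
      (fun t ht => by
        obtain ⟨ω, -, rfl⟩ := Finset.mem_image.mp ht
        exact Finset.mem_image_of_mem _ (Finset.mem_univ ω))]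
    apply Finset.sum_le_sum
    intro s hs
    set d : ℕ := (Finset.univ.filter fun ω => h (V ω) = s).card with hd
    have hdpos : 0 < d := fiber_pos _ hs
    have hdsum : d = ∑ t ∈ (Finset.univ.image V).filter (fun t => h t = s),
        (Finset.univ.filter fun ω => V ω = t).card := by
      rw [hd, Finset.card_eq_sum_card_fiberwise (f := V)
        (t := (Finset.univ.image V).filter (fun t => h t = s))
        (fun ω hω => Finset.mem_filter.mpr
          ⟨Finset.mem_image_of_mem _ (Finset.mem_univ ω), (Finset.mem_filter.mp hω).2⟩)]
      refine Finset.sum_congr rfl fun t ht => ?_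
      congr 1
      rw [Finset.filter_filter]
      refine Finset.filter_congr fun ω _ => ?_
      constructor
      · exact fun hw => hw.2
      · intro hw
        exact ⟨by rw [hw]; exact (Finset.mem_filter.mp ht).2, hw⟩
    calc ((d : ℝ) / n) * Real.logb 2 (n / d)
        = ∑ t ∈ (Finset.univ.image V).filter (fun t => h t = s),
            ((Finset.univ.filter fun ω => V ω = t).card : ℝ) / n * Real.logb 2 (n / d) := by
          rw [← Finset.sum_mul, ← Finset.sum_div]
          norm_cast
          rw [← hdsum]
      _ ≤ ∑ t ∈ (Finset.univ.image V).filter (fun t => h t = s),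
            ((Finset.univ.filter fun ω => V ω = t).card : ℝ) / n *
              Real.logb 2 (n / (Finset.univ.filter fun ω => V ω = t).card) := by
          refine Finset.sum_le_sum fun t ht => ?_
          have htim := (Finset.mem_filter.mp ht).1
          have hcpos : 0 < (Finset.univ.filter fun ω => V ω = t).card := fiber_pos _ htim
          have hcd : (Finset.univ.filter fun ω => V ω = t).card ≤ d := by
            apply Finset.card_le_card
        /- fiber of V at t ⊆ fiber of h∘V at s -/
            refine Finset.monotone_filter_right _ ?_
            intro ω _ hω
            rw [hω]
            exact (Finset.mem_filter.mp ht).2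
          apply mul_le_mul_of_nonneg_left _ (by positivity)
          apply Real.logb_le_logb_of_le one_lt_two (by positivity)
          apply div_le_div_of_nonneg_left hn0.le (by exact_mod_cast hcpos)
          exact_mod_cast hcd

lemma sum_fiber_comp {Ω P U : Type*} [Fintype Ω] (pr : Ω → P) (e : P → U) (F : U → ℝ) :
    ∑ p ∈ Finset.univ.image pr,
        ((Finset.univ.filter fun ω => pr ω = p).card : ℝ) * F (e p)
      = ∑ u ∈ Finset.univ.image (fun ω => e (pr ω)),
        ((Finset.univ.filter fun ω => e (pr ω) = u).card : ℝ) * F u := by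
  rw [← Finset.sum_fiberwise_of_maps_to (g := e)
      (t := Finset.univ.image fun ω => e (pr ω))
      (fun p hp => by
        obtain ⟨ω, -, rfl⟩ := Finset.mem_image.mp hp
        exact Finset.mem_image_of_mem _ (Finset.mem_univ ω))]
  refine Finset.sum_congr rfl fun u hu => ?_
  have hmaps : ∀ ω ∈ Finset.univ.filter (fun ω => e (pr ω) = u),
      pr ω ∈ (Finset.univ.image pr).filter (fun p => e p = u) := fun ω hω =>
    Finset.mem_filter.mpr ⟨Finset.mem_image_of_mem _ (Finset.mem_univ ω),
      (Finset.mem_filter.mp hω).2⟩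
  have hcard : (Finset.univ.filter fun ω => e (pr ω) = u).card
      = ∑ p ∈ (Finset.univ.image pr).filter (fun p => e p = u),
          (Finset.univ.filter fun ω => pr ω = p).card := by
    rw [Finset.card_eq_sum_card_fiberwise hmaps]
    refine Finset.sum_congr rfl fun p hp => ?_
    congr 1
    rw [Finset.filter_filter]
    refine Finset.filter_congr fun ω _ => ?_
    constructor
    · exact fun h => h.2
    · exact fun h => ⟨by rw [h]; exact (Finset.mem_filter.mp hp).2, h⟩
  calc ∑ p ∈ (Finset.univ.image pr).filter (fun p => e p = u),
        ((Finset.univ.filter fun ω => pr ω = p).card : ℝ) * F (e p)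
      = ∑ p ∈ (Finset.univ.image pr).filter (fun p => e p = u),
        ((Finset.univ.filter fun ω => pr ω = p).card : ℝ) * F u :=
        Finset.sum_congr rfl fun p hp => by rw [(Finset.mem_filter.mp hp).2]
    _ = (∑ p ∈ (Finset.univ.image pr).filter (fun p => e p = u),
        ((Finset.univ.filter fun ω => pr ω = p).card : ℝ)) * F u :=
        (Finset.sum_mul _ _ _).symm
    _ = ((Finset.univ.filter fun ω => e (pr ω) = u).card : ℝ) * F u := by
        rw [hcard]; push_cast; ring

lemma uH_pair_le {Ω S T : Type*} [Fintype Ω] (V : Ω → S) (W : Ω → T) :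
    uH (fun ω => (V ω, W ω)) ≤ uH V + uH W := by
  cases isEmpty_or_nonempty Ω with
  | inl hΩ => simp [uH, Finset.univ_eq_empty]
  | inr hΩ =>
    have hn0 : (0:ℝ) < (Fintype.card Ω : ℝ) := by exact_mod_cast Fintype.card_pos
    set n : ℝ := (Fintype.card Ω : ℝ) with hn
    set P := @Finset.image Ω (S × T) (fun a b => Classical.propDecidable (a = b))
      (fun ω => (V ω, W ω)) Finset.univ with hP
    set a : S → ℝ := fun v => ((Finset.univ.filter fun ω => V ω = v).card : ℝ) with ha
    set b : T → ℝ := fun w => ((Finset.univ.filter fun ω => W ω = w).card : ℝ) with hb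
    set cc : S × T → ℝ :=
      fun p => ((@Finset.filter Ω (fun ω => (V ω, W ω) = p)
        (fun ω => Classical.propDecidable _) Finset.univ).card : ℝ) with hcc
    have hl2 : (0:ℝ) < Real.log 2 := Real.log_pos one_lt_two
    -- rewrite uH V and uH W as sums over P
    have h1 := sum_fiber_comp (fun ω => (V ω, W ω)) Prod.fst
      (fun u => Real.logb 2 (n / a u) / n)
    simp only [Prod.fst] at h1
    have hV : uH V = ∑ p ∈ P, cc p * (Real.logb 2 (n / a p.1) / n) := by
      rw [uH, ← hn]
      simp only [hP, hcc]
      refine Eq.trans ?_ h1.symm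
      refine Finset.sum_congr rfl fun u hu => ?_
      simp only [ha]
      ring
    have h2 := sum_fiber_comp (fun ω => (V ω, W ω)) Prod.snd
      (fun u => Real.logb 2 (n / b u) / n)
    simp only [Prod.snd] at h2
    have hW : uH W = ∑ p ∈ P, cc p * (Real.logb 2 (n / b p.2) / n) := by
      rw [uH, ← hn]
      simp only [hP, hcc]
      refine Eq.trans ?_ h2.symm
      refine Finset.sum_congr rfl fun u hu => ?_
      simp only [hb]
      ring
    have hVW : uH (fun ω => (V ω, W ω)) = ∑ p ∈ P, cc p / n * Real.logb 2 (n / cc p) := by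
      rw [uH, ← hn]
    -- positivity of fibers on P
    have hposP : ∀ p ∈ P, 0 < a p.1 ∧ 0 < b p.2 ∧ 0 < cc p := by
      intro p hp
      rw [hP] at hp
      simp only [Finset.mem_image] at hp
      obtain ⟨ω, -, rfl⟩ := hp
      refine ⟨?_, ?_, ?_⟩ <;>
        · simp only [ha, hb, hcc, Nat.cast_pos, Finset.card_pos]
          exact ⟨ω, by simp⟩
    -- sum of joint fibers is n
    have hsumcc : ∑ p ∈ P, cc p = n := by
      rw [hP, hcc, hn, ← Nat.cast_sum]
      exact_mod_cast sum_fiber_card (fun ω => (V ω, W ω))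
    -- sum of products of marginals over P is at most n^2
    have hsumab : ∑ p ∈ P, a p.1 * b p.2 ≤ n ^ 2 := by
      have hsub : P ⊆ (Finset.univ.image V) ×ˢ (Finset.univ.image W) := by
        intro p hp
        rw [hP] at hp
        simp only [Finset.mem_image] at hp
        obtain ⟨ω, -, rfl⟩ := hp
        exact Finset.mem_product.mpr ⟨Finset.mem_image_of_mem _ (Finset.mem_univ ω),
          Finset.mem_image_of_mem _ (Finset.mem_univ ω)⟩
      have h1' : ∑ p ∈ P, a p.1 * b p.2
          ≤ ∑ p ∈ (Finset.univ.image V) ×ˢ (Finset.univ.image W), a p.1 * b p.2 :=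
        Finset.sum_le_sum_of_subset_of_nonneg hsub
          (fun p _ _ => by simp only [ha, hb]; positivity)
      have h2' : ∑ p ∈ (Finset.univ.image V) ×ˢ (Finset.univ.image W), a p.1 * b p.2
          = (∑ v ∈ Finset.univ.image V, a v) * (∑ w ∈ Finset.univ.image W, b w) := by
        rw [Finset.sum_product, Finset.sum_mul_sum]
      have h3' : (∑ v ∈ Finset.univ.image V, a v) = n := by
        rw [ha, hn, ← Nat.cast_sum]
        exact_mod_cast sum_fiber_card V
      have h4' : (∑ w ∈ Finset.univ.image W, b w) = n := by
        rw [hb, hn, ← Nat.cast_sum]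
        exact_mod_cast sum_fiber_card W
      calc ∑ p ∈ P, a p.1 * b p.2 ≤ _ := h1'
        _ = n * n := by rw [h2', h3', h4']
        _ = n ^ 2 := by ring
    -- per-term inequality
    have hterm : ∀ p ∈ P,
        cc p / n * Real.logb 2 (n / cc p)
          ≤ cc p * (Real.logb 2 (n / a p.1) / n) + cc p * (Real.logb 2 (n / b p.2) / n)
            + (a p.1 * b p.2 / n ^ 2 - cc p / n) / Real.log 2 := by
      intro p hp
      obtain ⟨hA0, hB0, hC0⟩ := hposP p hp
      set A := a p.1; set B := b p.2; set C := cc p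
      have e2 : Real.log (n/A) = Real.log n - Real.log A := Real.log_div hn0.ne' hA0.ne'
      have e3 : Real.log (n/B) = Real.log n - Real.log B := Real.log_div hn0.ne' hB0.ne'
      have e4 : Real.log (n/C) = Real.log n - Real.log C := Real.log_div hn0.ne' hC0.ne'
      have e1 : Real.log (A*B/(n*C)) = Real.log A + Real.log B - (Real.log n + Real.log C) := by
        rw [Real.log_div (by positivity) (by positivity), Real.log_mul hA0.ne' hB0.ne',
          Real.log_mul hn0.ne' hC0.ne']
      have hlog : Real.log (A*B/(n*C)) ≤ A*B/(n*C) - 1 :=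
        Real.log_le_sub_one_of_pos (by positivity)
      have hmul : C/n * Real.log (n/C) - C/n * Real.log (n/A) - C/n * Real.log (n/B)
          ≤ A*B/n^2 - C/n := by
        have hstep := mul_le_mul_of_nonneg_left hlog
          (le_of_lt (show (0:ℝ) < C/n by positivity))
        calc C/n * Real.log (n/C) - C/n * Real.log (n/A) - C/n * Real.log (n/B)
            = C/n * Real.log (A*B/(n*C)) := by rw [e1, e2, e3, e4]; ring
          _ ≤ C/n * (A*B/(n*C) - 1) := hstep
          _ = A*B/n^2 - C/n := by field_simp
      calc C / n * Real.logb 2 (n / C)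
          = (C/n * Real.log (n/C)) / Real.log 2 := by rw [Real.logb]; ring
        _ ≤ (C/n * Real.log (n/A) + C/n * Real.log (n/B) + (A*B/n^2 - C/n)) / Real.log 2 := by
            apply div_le_div_of_nonneg_right ?_ hl2.le
            linarith [hmul]
        _ = C * (Real.logb 2 (n / A) / n) + C * (Real.logb 2 (n / B) / n)
            + (A * B / n ^ 2 - C / n) / Real.log 2 := by
            rw [Real.logb, Real.logb]; ring
    -- put it together
    have hsum : uH (fun ω => (V ω, W ω))
        ≤ uH V + uH W + (∑ p ∈ P, a p.1 * b p.2 / n ^ 2 - ∑ p ∈ P, cc p / n) / Real.log 2 := by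
      rw [hVW, hV, hW]
      calc ∑ p ∈ P, cc p / n * Real.logb 2 (n / cc p)
          ≤ ∑ p ∈ P, (cc p * (Real.logb 2 (n / a p.1) / n)
              + cc p * (Real.logb 2 (n / b p.2) / n)
              + (a p.1 * b p.2 / n ^ 2 - cc p / n) / Real.log 2) :=
            Finset.sum_le_sum hterm
        _ = _ := by
            rw [Finset.sum_add_distrib, Finset.sum_add_distrib, ← Finset.sum_div,
              Finset.sum_sub_distrib]
    have hlast : (∑ p ∈ P, a p.1 * b p.2 / n ^ 2 - ∑ p ∈ P, cc p / n) / Real.log 2 ≤ 0 := by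
      apply div_nonpos_of_nonpos_of_nonneg _ hl2.le
      rw [← Finset.sum_div, ← Finset.sum_div, hsumcc]
      have hd1 : (∑ p ∈ P, a p.1 * b p.2) / n ^ 2 ≤ 1 := by
        rw [div_le_one (by positivity)]
        exact hsumab
      have hd2 : n / n = 1 := div_self hn0.ne'
      linarith
    linarith [hsum, hlast]

/-- With `X3` uniform on `A^k`, the entropy of the `≈`-class of `X3` is at most
`H(Z31) + H(Z32)` where `Z31 = φ31(X3)`, `Z32 = φ32(X3)`. -/
theorem stmt_4 {A B Z : Type*} [Fintype A] [Fintype B] [Fintype Z]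
    (hA : 1 < Fintype.card A) (hZ : 1 < Fintype.card Z)
    {k : ℕ} (hk : 1 ≤ k) (f : A → A → A → B) (c : ZECode A B Z k f) :
    uH (fun x3 : Fin k → A => Quotient.mk (approxSetoid f k) x3) ≤
      uH (fun x3 : Fin k → A => c.phi31 x3) + uH (fun x3 : Fin k → A => c.phi32 x3) := by
  have hNA : Nonempty A := Fintype.card_pos_iff.mp (by omega)
  have hNAk : Nonempty (Fin k → A) := ⟨fun _ => hNA.some⟩
  have hkey : ∀ x y : Fin k → A, c.phi31 x = c.phi31 y → c.phi32 x = c.phi32 y →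
      Quotient.mk (approxSetoid f k) x = Quotient.mk (approxSetoid f k) y := by
    intro x y h31 h32
    apply Quotient.sound
    intro x1 x2 i
    have hx := c.zero_error x1 x2 x
    have hy := c.zero_error x1 x2 y
    rw [h31, h32] at hx
    exact congrFun (hx.symm.trans hy) i
  obtain ⟨h, hh⟩ : ∃ h : List Z × List Z → Quotient (approxSetoid f k),
      ∀ x : Fin k → A, h (c.phi31 x, c.phi32 x) = Quotient.mk (approxSetoid f k) x := by
    refine ⟨fun z =>
      if hz : ∃ x : Fin k → A, (c.phi31 x, c.phi32 x) = z then
        Quotient.mk (approxSetoid f k) hz.choose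
      else Quotient.mk (approxSetoid f k) (Classical.arbitrary _), fun x => ?_⟩
    have hz : ∃ x' : Fin k → A, (c.phi31 x', c.phi32 x') = (c.phi31 x, c.phi32 x) := ⟨x, rfl⟩
    beta_reduce
    rw [dif_pos hz]
    have hspec := hz.choose_spec
    exact hkey _ _ (congrArg Prod.fst hspec) (congrArg Prod.snd hspec)
  calc uH (fun x3 : Fin k → A => Quotient.mk (approxSetoid f k) x3)
      = uH (fun x3 : Fin k → A => h (c.phi31 x3, c.phi32 x3)) := by
        exact congrArg uH (funext fun x => (hh x).symm)
    _ ≤ uH (fun x3 : Fin k → A => (c.phi31 x3, c.phi32 x3)) :=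
        uH_comp_le (fun x3 : Fin k → A => (c.phi31 x3, c.phi32 x3)) h
    _ ≤ uH (fun x3 : Fin k → A => c.phi31 x3) + uH (fun x3 : Fin k → A => c.phi32 x3) :=
        uH_pair_le _ _
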